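/- Let ε̂ = (I-H)Y be the full-regression residual and ε̃ = (I-H̃2)Ỹ the partial-regression residual, and define σ̂² = ‖ε̂‖²/(n-K-L), σ̃² = ‖ε̃‖²/(n-L). Then the homoskedastic covariance estimator for β̂2 from the full regression, V̂ = σ̂² · [(X'X)^{-1}]_{22}, and that from the partial regression, Ṽ = σ̃²(X̃2'X̃2)^{-1}, satisfy (n-K-L)V̂ = (n-L)Ṽ. -/

import Mathlib

open Matrix

/-- Right inverse of a 2×2 block matrix via the Schur complement. -/
lemma schur_inv_right {m l : Type*} [Fintype m] [Fintype l] [DecidableEq m] [DecidableEq l]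
    (A : Matrix m m ℝ) (B : Matrix m l ℝ) (C : Matrix l m ℝ) (D : Matrix l l ℝ)
    (A' : Matrix m m ℝ) (S' : Matrix l l ℝ)
    (hA : A * A' = 1) (hS : (D - C * A' * B) * S' = 1) :
    Matrix.fromBlocks A B C D *
      Matrix.fromBlocks (A' + A' * (B * (S' * (C * A')))) (-(A' * (B * S')))
        (-(S' * (C * A'))) S' = 1 := by
  have g11 : A * (A' + A' * (B * (S' * (C * A')))) + B * -(S' * (C * A')) = 1 := by
    rw [Matrix.mul_add, Matrix.mul_neg, ← Matrix.mul_assoc A A', hA, Matrix.one_mul]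
    abel
  have g12 : A * -(A' * (B * S')) + B * S' = 0 := by
    rw [Matrix.mul_neg, ← Matrix.mul_assoc A A', hA, Matrix.one_mul]
    abel
  have g21 : C * (A' + A' * (B * (S' * (C * A')))) + D * -(S' * (C * A')) = 0 := by
    have hz : (D - C * A' * B) * (S' * (C * A')) = C * A' := by
      rw [← Matrix.mul_assoc, hS, Matrix.one_mul]
    have h2 : C * (A' + A' * (B * (S' * (C * A')))) + D * -(S' * (C * A'))
        = C * A' - (D - C * A' * B) * (S' * (C * A')) := by
      rw [Matrix.sub_mul, Matrix.mul_add, Matrix.mul_neg,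
        ← Matrix.mul_assoc C A', ← Matrix.mul_assoc (C * A') B]
      abel
    rw [h2, hz, sub_self]
  have g22 : C * -(A' * (B * S')) + D * S' = 1 := by
    have h2 : C * -(A' * (B * S')) + D * S' = (D - C * A' * B) * S' := by
      rw [Matrix.sub_mul, Matrix.mul_neg, ← Matrix.mul_assoc C A',
        ← Matrix.mul_assoc (C * A') B]
      abel
    rw [h2, hS]
  rw [Matrix.fromBlocks_multiply, g11, g12, g21, g22, Matrix.fromBlocks_one]

theorem stmt_7 {n K L : ℕ} (hn : K + L < n)
    (X1 : Matrix (Fin n) (Fin K) ℝ) (X2 : Matrix (Fin n) (Fin L) ℝ) (Y : Fin n → ℝ)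
    (X : Matrix (Fin n) (Fin K ⊕ Fin L) ℝ) (hX : X = Matrix.fromCols X1 X2)
    (H : Matrix (Fin n) (Fin n) ℝ) (hH : H = X * (Xᵀ * X)⁻¹ * Xᵀ)
    (H1 : Matrix (Fin n) (Fin n) ℝ) (hH1 : H1 = X1 * (X1ᵀ * X1)⁻¹ * X1ᵀ)
    (X2t : Matrix (Fin n) (Fin L) ℝ) (hX2t : X2t = (1 - H1) * X2)
    (H2t : Matrix (Fin n) (Fin n) ℝ) (hH2t : H2t = X2t * (X2tᵀ * X2t)⁻¹ * X2tᵀ)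
    (Yt : Fin n → ℝ) (hYt : Yt = (1 - H1) *ᵥ Y)
    (epsHat : Fin n → ℝ) (hepsHat : epsHat = (1 - H) *ᵥ Y)
    (epsTilde : Fin n → ℝ) (hepsTilde : epsTilde = (1 - H2t) *ᵥ Yt)
    (sigmaHatSq : ℝ) (hsigmaHatSq : sigmaHatSq = (∑ i, epsHat i ^ 2) / ((n : ℝ) - K - L))
    (sigmaTildeSq : ℝ) (hsigmaTildeSq : sigmaTildeSq = (∑ i, epsTilde i ^ 2) / ((n : ℝ) - L))
    (VHat : Matrix (Fin L) (Fin L) ℝ) (hVHat : VHat = sigmaHatSq • ((Xᵀ * X)⁻¹).toBlocks₂₂)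
    (VTilde : Matrix (Fin L) (Fin L) ℝ) (hVTilde : VTilde = sigmaTildeSq • (X2tᵀ * X2t)⁻¹)
    (hGX : IsUnit (Xᵀ * X)) (hG1 : IsUnit (X1ᵀ * X1)) (hG2 : IsUnit (X2tᵀ * X2t)) :
    ((n : ℝ) - K - L) • VHat = ((n : ℝ) - L) • VTilde := by
  -- determinant units
  have hdG : IsUnit (Xᵀ * X).det := (Matrix.isUnit_iff_isUnit_det _).mp hGX
  have hdA : IsUnit (X1ᵀ * X1).det := (Matrix.isUnit_iff_isUnit_det _).mp hG1
  have hdS : IsUnit (X2tᵀ * X2t).det := (Matrix.isUnit_iff_isUnit_det _).mp hG2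
  have hGr : (Xᵀ * X)⁻¹ * (Xᵀ * X) = 1 := Matrix.nonsing_inv_mul _ hdG
  have hA : (X1ᵀ * X1) * (X1ᵀ * X1)⁻¹ = 1 := Matrix.mul_nonsing_inv _ hdA
  have hA' : (X1ᵀ * X1)⁻¹ * (X1ᵀ * X1) = 1 := Matrix.nonsing_inv_mul _ hdA
  have hS : (X2tᵀ * X2t) * (X2tᵀ * X2t)⁻¹ = 1 := Matrix.mul_nonsing_inv _ hdS
  have hS' : (X2tᵀ * X2t)⁻¹ * (X2tᵀ * X2t) = 1 := Matrix.nonsing_inv_mul _ hdS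
  -- symmetry facts
  have hGsym : (Xᵀ * X)ᵀ = Xᵀ * X := by rw [Matrix.transpose_mul, Matrix.transpose_transpose]
  have hAsym : (X1ᵀ * X1)ᵀ = X1ᵀ * X1 := by rw [Matrix.transpose_mul, Matrix.transpose_transpose]
  have hSsym : (X2tᵀ * X2t)ᵀ = X2tᵀ * X2t := by
    rw [Matrix.transpose_mul, Matrix.transpose_transpose]
  have hHsym : Hᵀ = H := by
    rw [hH, Matrix.transpose_mul, Matrix.transpose_mul, Matrix.transpose_transpose,
      Matrix.transpose_nonsing_inv, hGsym, Matrix.mul_assoc]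
  have hH1sym : H1ᵀ = H1 := by
    rw [hH1, Matrix.transpose_mul, Matrix.transpose_mul, Matrix.transpose_transpose,
      Matrix.transpose_nonsing_inv, hAsym, Matrix.mul_assoc]
  have hH2tsym : H2tᵀ = H2t := by
    rw [hH2t, Matrix.transpose_mul, Matrix.transpose_mul, Matrix.transpose_transpose,
      Matrix.transpose_nonsing_inv, hSsym, Matrix.mul_assoc]
  -- basic projection algebra
  have hH1X1 : H1 * X1 = X1 := by
    rw [hH1]
    simp only [Matrix.mul_assoc]
    rw [hA', Matrix.mul_one]
  have hM1X1 : (1 - H1) * X1 = 0 := by rw [Matrix.sub_mul, Matrix.one_mul, hH1X1, sub_self]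
  have hH1idem : H1 * H1 = H1 := by
    have h : H1 * H1 = H1 * X1 * ((X1ᵀ * X1)⁻¹ * X1ᵀ) := by
      rw [hH1]; simp only [Matrix.mul_assoc]
    rw [h, hH1X1, ← Matrix.mul_assoc, ← hH1]
  have hM1idem : (1 - H1) * (1 - H1) = 1 - H1 := by
    rw [Matrix.mul_sub, Matrix.mul_one, Matrix.sub_mul, Matrix.one_mul, hH1idem]
    abel
  have hM1sym : (1 - H1)ᵀ = 1 - H1 := by rw [Matrix.transpose_sub, Matrix.transpose_one, hH1sym]
  have hX2tT : X2tᵀ = X2ᵀ * (1 - H1) := by rw [hX2t, Matrix.transpose_mul, hM1sym]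
  have hX2tTX1 : X2tᵀ * X1 = 0 := by
    rw [hX2tT, Matrix.mul_assoc, hM1X1, Matrix.mul_zero]
  have hM1H1 : (1 - H1) * H1 = 0 := by rw [Matrix.sub_mul, Matrix.one_mul, hH1idem, sub_self]
  have hX2tTH1 : X2tᵀ * H1 = 0 := by rw [hX2tT, Matrix.mul_assoc, hM1H1, Matrix.mul_zero]
  have hH2tH1 : H2t * H1 = 0 := by rw [hH2t, Matrix.mul_assoc, hX2tTH1, Matrix.mul_zero]
  have hH2tX1 : H2t * X1 = 0 := by rw [hH2t, Matrix.mul_assoc, hX2tTX1, Matrix.mul_zero]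
  have hH2tX2t : H2t * X2t = X2t := by
    rw [hH2t]
    simp only [Matrix.mul_assoc]
    rw [hS', Matrix.mul_one]
  -- H * X = X and consequences
  have hHX : H * X = X := by
    rw [hH, Matrix.mul_assoc, Matrix.mul_assoc, hGr, Matrix.mul_one]
  have hHX12 : H * X1 = X1 ∧ H * X2 = X2 := by
    have h := hHX
    rw [hX, Matrix.mul_fromCols, Matrix.fromCols_ext_iff] at h
    exact h
  have hHX1 : H * X1 = X1 := hHX12.1
  have hHX2 : H * X2 = X2 := hHX12.2
  have hHH1 : H * H1 = H1 := by
    have h : H * H1 = H * X1 * ((X1ᵀ * X1)⁻¹ * X1ᵀ) := by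
      rw [hH1]; simp only [Matrix.mul_assoc]
    rw [h, hHX1, ← Matrix.mul_assoc, ← hH1]
  have hHX2t : H * X2t = X2t := by
    rw [hX2t, ← Matrix.mul_assoc, Matrix.mul_sub, Matrix.mul_one, hHH1, Matrix.sub_mul,
      Matrix.sub_mul, Matrix.one_mul, hHX2]
  have hHH2t : H * H2t = H2t := by
    have h : H * H2t = H * X2t * ((X2tᵀ * X2t)⁻¹ * X2tᵀ) := by
      rw [hH2t]; simp only [Matrix.mul_assoc]
    rw [h, hHX2t, ← Matrix.mul_assoc, ← hH2t]
  -- (H1 + H2t) * X = X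
  have hX2dec : X2 = X2t + H1 * X2 := by
    rw [hX2t, Matrix.sub_mul, Matrix.one_mul]
    abel
  have hH2tX2 : H2t * X2 = X2t := by
    rw [hX2dec, Matrix.mul_add, hH2tX2t, ← Matrix.mul_assoc, hH2tH1, Matrix.zero_mul, add_zero]
  have hPX1 : (H1 + H2t) * X1 = X1 := by
    rw [Matrix.add_mul, hH1X1, hH2tX1, add_zero]
  have hPX2 : (H1 + H2t) * X2 = X2 := by
    rw [Matrix.add_mul, hH2tX2, hX2t, Matrix.sub_mul, Matrix.one_mul]
    abel
  have hPX : (H1 + H2t) * X = X := by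
    rw [hX, Matrix.mul_fromCols, hPX1, hPX2]
  have hPH : (H1 + H2t) * H = H := by
    rw [hH, ← Matrix.mul_assoc, ← Matrix.mul_assoc, hPX]
  have hHP : H * (H1 + H2t) = H1 + H2t := by rw [Matrix.mul_add, hHH1, hHH2t]
  have hPsym : (H1 + H2t)ᵀ = H1 + H2t := by rw [Matrix.transpose_add, hH1sym, hH2tsym]
  -- FWL: H = H1 + H2t
  have hHeq : H = H1 + H2t := by
    have h1 : Hᵀ * (H1 + H2t)ᵀ = Hᵀ := by rw [← Matrix.transpose_mul, hPH]
    rw [hHsym, hPsym] at h1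
    exact h1.symm.trans hHP
  -- residual equality
  have hfac : (1 - H2t) * (1 - H1) = 1 - H := by
    rw [Matrix.sub_mul, Matrix.one_mul, Matrix.mul_sub, Matrix.mul_one, hH2tH1, hHeq]
    abel
  have hEps : epsTilde = epsHat := by
    rw [hepsTilde, hYt, Matrix.mulVec_mulVec, hfac, hepsHat]
  -- Schur complement value
  have hSval : X2tᵀ * X2t = X2ᵀ * X2 - X2ᵀ * X1 * (X1ᵀ * X1)⁻¹ * (X1ᵀ * X2) := by
    rw [hX2tT, hX2t, Matrix.mul_assoc, ← Matrix.mul_assoc (1 - H1) (1 - H1) X2, hM1idem,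
      Matrix.sub_mul, Matrix.one_mul, Matrix.mul_sub, hH1]
    simp only [Matrix.mul_assoc]
  -- block structure of XᵀX
  have hblk : Xᵀ * X = Matrix.fromBlocks (X1ᵀ * X1) (X1ᵀ * X2) (X2ᵀ * X1) (X2ᵀ * X2) := by
    rw [hX, Matrix.transpose_fromCols, Matrix.fromRows_mul_fromCols]
  have hSchur : (X2ᵀ * X2 - X2ᵀ * X1 * (X1ᵀ * X1)⁻¹ * (X1ᵀ * X2)) * (X2tᵀ * X2t)⁻¹ = 1 := by
    rw [← hSval]; exact hS
  have hinv : (Xᵀ * X)⁻¹ =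
      Matrix.fromBlocks
        ((X1ᵀ * X1)⁻¹ + (X1ᵀ * X1)⁻¹ *
          ((X1ᵀ * X2) * ((X2tᵀ * X2t)⁻¹ * ((X2ᵀ * X1) * (X1ᵀ * X1)⁻¹))))
        (-((X1ᵀ * X1)⁻¹ * ((X1ᵀ * X2) * (X2tᵀ * X2t)⁻¹)))
        (-((X2tᵀ * X2t)⁻¹ * ((X2ᵀ * X1) * (X1ᵀ * X1)⁻¹)))
        ((X2tᵀ * X2t)⁻¹) := by
    apply Matrix.inv_eq_right_inv
    rw [hblk]
    exact schur_inv_right (X1ᵀ * X1) (X1ᵀ * X2) (X2ᵀ * X1) (X2ᵀ * X2) (X1ᵀ * X1)⁻¹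
      (X2tᵀ * X2t)⁻¹ hA hSchur
  have htb22 : ((Xᵀ * X)⁻¹).toBlocks₂₂ = (X2tᵀ * X2t)⁻¹ := by
    rw [hinv, Matrix.toBlocks_fromBlocks₂₂]
  -- nonzero denominators
  have hnn1 : (n : ℝ) - K - L ≠ 0 := by
    have : (K : ℝ) + L < n := by exact_mod_cast hn
    linarith
  have hnn2 : (n : ℝ) - L ≠ 0 := by
    have : (K : ℝ) + L < n := by exact_mod_cast hn
    have hK : (0 : ℝ) ≤ K := Nat.cast_nonneg K
    linarith
  -- final computation
  rw [hVHat, hVTilde, htb22, hsigmaHatSq, hsigmaTildeSq, hEps, smul_smul, smul_smul]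
  congr 1
  field_simp
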